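/- Let P > 0, N₀ > 0, η ∈ (0,1], β ∈ (0,1), and δ > 1. Define ν(x) = (1−β)·( ηβPx/(N₀(ηβx + (1−β))) − Pδ/(P(1−β)x + N₀) ) for x ≥ 0, and θ₁ = [ (δ−1)/(1−β) + √( ((δ−1)/(1−β))² + 4δP/(ηβN₀) ) ] / (2P/N₀). Then θ₁ > 0, ν(θ₁) = 0, ν(x) < 0 for all 0 ≤ x < θ₁, and ν(x) ≥ 0 for all x ≥ θ₁. -/

import Mathlib

open Real

set_option maxHeartbeats 1000000 in
/-- **Sign pattern of `ν` for the PS policy.** With `ν(x) = (1-β)(ηβPx/(N₀(ηβx+(1-β))) -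
Pδ/(P(1-β)x+N₀))` and `θ₁` as given, `θ₁ > 0`, `ν θ₁ = 0`, `ν < 0` on `[0, θ₁)` and
`ν ≥ 0` on `[θ₁, ∞)`. -/
theorem nu_sign_PS (P N0 η β δ : ℝ) (hP : 0 < P) (hN0 : 0 < N0)
    (hη0 : 0 < η) (hη1 : η ≤ 1) (hβ0 : 0 < β) (hβ1 : β < 1) (hδ : 1 < δ)
    (ν : ℝ → ℝ)
    (hν : ∀ x, ν x = (1 - β) * (η * β * P * x / (N0 * (η * β * x + (1 - β)))
        - P * δ / (P * (1 - β) * x + N0)))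
    (θ1 : ℝ)
    (hθ1 : θ1 = ((δ - 1) / (1 - β)
        + Real.sqrt (((δ - 1) / (1 - β)) ^ 2 + 4 * δ * P / (η * β * N0))) / (2 * (P / N0))) :
    0 < θ1 ∧ ν θ1 = 0 ∧ (∀ x, 0 ≤ x → x < θ1 → ν x < 0) ∧ (∀ x, θ1 ≤ x → 0 ≤ ν x) := by
  have hβ' : 0 < 1 - β := by linarith
  obtain ⟨k, hk⟩ : ∃ k, k = (δ - 1) / (1 - β) := ⟨_, rfl⟩
  obtain ⟨m, hm⟩ : ∃ m, m = 4 * δ * P / (η * β * N0) := ⟨_, rfl⟩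
  obtain ⟨s, hs⟩ : ∃ s, s = Real.sqrt (k ^ 2 + m) := ⟨_, rfl⟩
  have hk0 : 0 < k := by rw [hk]; exact div_pos (by linarith) hβ'
  have hm0 : 0 < m := by rw [hm]; positivity
  have hs2 : s ^ 2 = k ^ 2 + m := by rw [hs]; exact Real.sq_sqrt (by positivity)
  have hs0 : 0 ≤ s := by rw [hs]; exact Real.sqrt_nonneg _
  have hsk : k < s := by nlinarith
  have hs2' : s ^ 2 * (η * β * N0) = k ^ 2 * (η * β * N0) + 4 * δ * P := by
    rw [hs2, hm]; field_simp
  have hθ : θ1 = (k + s) * N0 / (2 * P) := by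
    rw [hθ1, ← hk, ← hm, ← hs]; field_simp
  have hθ0 : 0 < θ1 := by rw [hθ]; positivity
  obtain ⟨θ2, hθ2def⟩ : ∃ t, t = (k - s) * N0 / (2 * P) := ⟨_, rfl⟩
  have hθ2neg : θ2 < 0 := by
    rw [hθ2def]
    apply div_neg_of_neg_of_pos
    · nlinarith
    · linarith
  have hsum : (θ1 + θ2) * P = k * N0 := by
    rw [hθ, hθ2def]; field_simp; ring
  have hprod : θ1 * θ2 * (η * β * P) = -(δ * N0) := by
    rw [hθ, hθ2def]
    field_simp
    linear_combination (-1) * hs2'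
  have hkβ : k * (1 - β) = δ - 1 := by rw [hk]; field_simp
  have hval : ∀ x, 0 ≤ x → ν x = (1 - β) * (η * β * (1 - β)) * P ^ 2 * ((x - θ1) * (x - θ2))
      / ((N0 * (η * β * x + (1 - β))) * (P * (1 - β) * x + N0)) := by
    intro x hx
    have hB : (0:ℝ) < N0 * (η * β * x + (1 - β)) := by
      apply mul_pos hN0
      nlinarith [mul_nonneg (mul_nonneg hη0.le hβ0.le) hx]
    have hD : (0:ℝ) < P * (1 - β) * x + N0 := by
      nlinarith [mul_nonneg (mul_nonneg hP.le hβ'.le) hx]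
    rw [hν, div_sub_div _ _ (ne_of_gt hB) (ne_of_gt hD), mul_div_assoc']
    congr 1
    linear_combination (η*β*(1-β)^2*P*x) * hsum + ((1-β)*η*β*P*N0*x) * hkβ - ((1-β)^2*P) * hprod
  refine ⟨hθ0, ?_, ?_, ?_⟩
  · rw [hval θ1 hθ0.le]; simp
  · intro x hx hxθ
    rw [hval x hx]
    apply div_neg_of_neg_of_pos
    · have h1 : x - θ1 < 0 := by linarith
      have h2 : 0 < x - θ2 := by linarith
      exact mul_neg_of_pos_of_neg (by positivity) (mul_neg_of_neg_of_pos h1 h2)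
    · have hB : (0:ℝ) < N0 * (η * β * x + (1 - β)) := by
        apply mul_pos hN0
        nlinarith [mul_nonneg (mul_nonneg hη0.le hβ0.le) hx]
      have hD : (0:ℝ) < P * (1 - β) * x + N0 := by
        nlinarith [mul_nonneg (mul_nonneg hP.le hβ'.le) hx]
      exact mul_pos hB hD
  · intro x hxθ
    have hx : 0 ≤ x := le_trans hθ0.le hxθ
    rw [hval x hx]
    apply div_nonneg
    · have h1 : 0 ≤ x - θ1 := by linarith
      have h2 : 0 ≤ x - θ2 := by linarith
      exact mul_nonneg (by positivity) (mul_nonneg h1 h2)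
    · have hB : (0:ℝ) < N0 * (η * β * x + (1 - β)) := by
        apply mul_pos hN0
        nlinarith [mul_nonneg (mul_nonneg hη0.le hβ0.le) hx]
      have hD : (0:ℝ) < P * (1 - β) * x + N0 := by
        nlinarith [mul_nonneg (mul_nonneg hP.le hβ'.le) hx]
      exact (mul_pos hB hD).le
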